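/- Let $X$ be a real-valued random variable on a probability space, $v \in \mathbb{R}^d$ fixed, and $\Gamma$ a random variable with values in $[\gamma_{\min}, \gamma_{\max}]$ for deterministic constants $0 \le \gamma_{\min} \le \gamma_{\max}$. Let $Y$ be an $\mathbb{R}^d$-valued random variable with $\mathbb{E}[Y] = 0$ and $\mathbb{E}[\|Y\|] < \infty$. Then $\mathbb{E}[\Gamma \cdot Y^T v] \le (\gamma_{\max} - \gamma_{\min}) \|v\| \cdot \mathbb{E}[\|Y\|]$. -/

import Mathlib

open MeasureTheory
open scoped RealInnerProductSpace

/-- If `Γ ∈ [γmin, γmax]` a.s.-everywhere and `Y` has mean zero, then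
`E[Γ · Yᵀv] ≤ (γmax - γmin) ‖v‖ E[‖Y‖]`. -/
theorem bounded_factor_mean_zero_bound {Ω : Type*} [MeasurableSpace Ω]
    (μ : Measure Ω) [IsProbabilityMeasure μ]
    {d : ℕ} (v : EuclideanSpace ℝ (Fin d))
    (Γ : Ω → ℝ) (γmin γmax : ℝ) (hγ0 : 0 ≤ γmin) (hγ : γmin ≤ γmax)
    (hΓmem : ∀ ω, Γ ω ∈ Set.Icc γmin γmax) (hΓmeas : Measurable Γ)
    (Y : Ω → EuclideanSpace ℝ (Fin d)) (hYint : Integrable Y μ)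
    (hYmean : (∫ ω, Y ω ∂μ) = 0) :
    (∫ ω, Γ ω * ⟪Y ω, v⟫ ∂μ) ≤ (γmax - γmin) * ‖v‖ * ∫ ω, ‖Y ω‖ ∂μ := by
  have hf : Integrable (fun ω => ⟪Y ω, v⟫) μ := hYint.inner_const v
  have hΓf : Integrable (fun ω => (Γ ω - γmin) * ⟪Y ω, v⟫) μ := by
    refine hf.bdd_mul (c := γmax - γmin) ((hΓmeas.sub measurable_const).aestronglyMeasurable) (Filter.Eventually.of_forall ?_)
    intro ω
    have h := hΓmem ω
    rw [Real.norm_eq_abs, abs_sub_comm, abs_sub_le_iff]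
    constructor <;> linarith [h.1, h.2]
  have hΓfull : Integrable (fun ω => Γ ω * ⟪Y ω, v⟫) μ := by
    refine hf.bdd_mul (c := |γmin| + |γmax|) hΓmeas.aestronglyMeasurable (Filter.Eventually.of_forall ?_)
    intro ω
    have h := hΓmem ω
    rw [Real.norm_eq_abs, abs_le]
    constructor
    · linarith [neg_abs_le γmin, abs_nonneg γmax, h.1]
    · linarith [le_abs_self γmax, abs_nonneg γmin, h.2]
  have hfmean : (∫ ω, ⟪Y ω, v⟫ ∂μ) = 0 := by
    have h2 := integral_inner (𝕜 := ℝ) hYint v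
    rw [hYmean] at h2
    simp only [inner_zero_right] at h2
    calc (∫ ω, ⟪Y ω, v⟫ ∂μ) = ∫ ω, ⟪v, Y ω⟫ ∂μ := by
          simp_rw [real_inner_comm]
      _ = 0 := h2
  have hsplit : (∫ ω, Γ ω * ⟪Y ω, v⟫ ∂μ)
      = ∫ ω, (Γ ω - γmin) * ⟪Y ω, v⟫ ∂μ := by
    have heq : ∀ ω, (Γ ω - γmin) * ⟪Y ω, v⟫
        = Γ ω * ⟪Y ω, v⟫ - γmin * ⟪Y ω, v⟫ := fun ω => by ring
    rw [show (fun ω => (Γ ω - γmin) * ⟪Y ω, v⟫) = fun ω => Γ ω * ⟪Y ω, v⟫ - γmin * ⟪Y ω, v⟫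
        from funext heq] at *
    rw [integral_sub hΓfull (hf.const_mul γmin), integral_const_mul, hfmean]; ring
  rw [hsplit]
  have hbound : ∀ ω, (Γ ω - γmin) * ⟪Y ω, v⟫ ≤ (γmax - γmin) * (‖v‖ * ‖Y ω‖) := by
    intro ω
    have h := hΓmem ω
    have h1 : |⟪Y ω, v⟫| ≤ ‖v‖ * ‖Y ω‖ := by
      rw [mul_comm]; exact (abs_real_inner_le_norm _ _)
    calc (Γ ω - γmin) * ⟪Y ω, v⟫ ≤ (Γ ω - γmin) * |⟪Y ω, v⟫| := by
          apply mul_le_mul_of_nonneg_left (le_abs_self _); linarith [h.1]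
      _ ≤ (γmax - γmin) * (‖v‖ * ‖Y ω‖) := by
          apply mul_le_mul (by linarith [h.2]) h1 (abs_nonneg _) (by linarith)
  have hint2 : Integrable (fun ω => (γmax - γmin) * (‖v‖ * ‖Y ω‖)) μ :=
    (hYint.norm.const_mul _).const_mul _
  calc (∫ ω, (Γ ω - γmin) * ⟪Y ω, v⟫ ∂μ)
      ≤ ∫ ω, (γmax - γmin) * (‖v‖ * ‖Y ω‖) ∂μ :=
        integral_mono hΓf hint2 hbound
    _ = (γmax - γmin) * ‖v‖ * ∫ ω, ‖Y ω‖ ∂μ := by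
        rw [integral_const_mul, integral_const_mul]; ring
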